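/- arXiv:2211.15882 — 6 statements merged into one kernel-verified Lean document; each statement's English description precedes it below -/
import Mathlib

section
/- Let D = D_α be the diagonal operator on E_ω associated with a bounded sequence α : ℕ → K, and let μ ∈ K. If the set S = { i ∈ ℕ : α_i = μ } is finite, then the kernel N(μI − D) is a finite-dimensional K-vector space whose dimension equals the cardinality of S. -/
open Filter Topology

/-- The non-Archimedean Hilbert space `E_ω`: the space of sequences `u : ℕ → K`
such that `‖u i‖ * ‖ω i‖^(1/2) → 0`, as a submodule of `ℕ → K`. -/
def Eomega (K : Type*) [NontriviallyNormedField K] (ω : ℕ → K) : Submodule K (ℕ → K) where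
  carrier := {u | Tendsto (fun i => ‖u i‖ * Real.sqrt ‖ω i‖) atTop (𝓝 0)}
  zero_mem' := by simpa using (tendsto_const_nhds : Tendsto (fun _ : ℕ => (0:ℝ)) atTop (𝓝 0))
  add_mem' := by
    intro u v hu hv
    have h := hu.add hv
    rw [add_zero] at h
    refine squeeze_zero (fun i => by positivity) (fun i => ?_) h
    calc ‖(u + v) i‖ * Real.sqrt ‖ω i‖
        ≤ (‖u i‖ + ‖v i‖) * Real.sqrt ‖ω i‖ := by
          have : ‖(u + v) i‖ ≤ ‖u i‖ + ‖v i‖ := by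
            simpa [Pi.add_apply] using norm_add_le (u i) (v i)
          exact mul_le_mul_of_nonneg_right this (Real.sqrt_nonneg _)
      _ = ‖u i‖ * Real.sqrt ‖ω i‖ + ‖v i‖ * Real.sqrt ‖ω i‖ := by ring
  smul_mem' := by
    intro c u hu
    have h := hu.const_mul ‖c‖
    rw [mul_zero] at h
    refine squeeze_zero (fun i => by positivity) (fun i => le_of_eq ?_) h
    simp [Pi.smul_apply, norm_smul, mul_assoc]

lemma Eomega.bddAbove {K : Type*} [NontriviallyNormedField K] {ω : ℕ → K}
    (u : Eomega K ω) :
    BddAbove (Set.range fun i => ‖(u : ℕ → K) i‖ * Real.sqrt ‖ω i‖) :=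
  u.2.bddAbove_range

/-- The sup-norm on `E_ω`: `‖u‖ = sup_i ‖u i‖ * ‖ω i‖^(1/2)`. -/
noncomputable instance Eomega.instSeminormedAddCommGroup
    {K : Type*} [NontriviallyNormedField K] {ω : ℕ → K} :
    SeminormedAddCommGroup (Eomega K ω) :=
  AddGroupSeminorm.toSeminormedAddCommGroup
    { toFun := fun u => ⨆ i, ‖(u : ℕ → K) i‖ * Real.sqrt ‖ω i‖
      map_zero' := by simp
      add_le' := by
        intro u v
        refine ciSup_le fun i => ?_
        calc ‖((u + v : Eomega K ω) : ℕ → K) i‖ * Real.sqrt ‖ω i‖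
            ≤ ‖(u : ℕ → K) i‖ * Real.sqrt ‖ω i‖ + ‖(v : ℕ → K) i‖ * Real.sqrt ‖ω i‖ := by
              have : ‖((u + v : Eomega K ω) : ℕ → K) i‖ ≤ ‖(u : ℕ → K) i‖ + ‖(v : ℕ → K) i‖ := by
                simpa using norm_add_le ((u : ℕ → K) i) ((v : ℕ → K) i)
              nlinarith [Real.sqrt_nonneg ‖ω i‖, norm_nonneg ((u : ℕ → K) i),
                norm_nonneg ((v : ℕ → K) i)]
          _ ≤ _ := add_le_add (le_ciSup (Eomega.bddAbove u) i) (le_ciSup (Eomega.bddAbove v) i)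
      neg' := by intro u; simp }


/-- Shortcut instance making sure that the topology of `E_ω` used below is the
norm topology (and not the topology induced by the product topology on
`ℕ → K`). -/
noncomputable instance (priority := 5000) Eomega.instTopologicalSpace
    {K : Type*} [NontriviallyNormedField K] {ω : ℕ → K} :
    TopologicalSpace (Eomega K ω) :=
  Eomega.instSeminormedAddCommGroup.toUniformSpace.toTopologicalSpace

/-- The diagonal operator `D = D_α` on `E_ω` associated with a bounded
sequence `α : ℕ → K`, given by `(D u) i = α i * u i`. -/
def diagOp {K : Type*} [NontriviallyNormedField K] (ω : ℕ → K) (α : ℕ → K)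
    (hα : ∃ C, ∀ i, ‖α i‖ ≤ C) : Eomega K ω →ₗ[K] Eomega K ω where
  toFun u := ⟨fun i => α i * (u : ℕ → K) i, by
    obtain ⟨C, hC⟩ := hα
    have h := u.2.const_mul C
    rw [mul_zero] at h
    refine squeeze_zero (fun i => by positivity) (fun i => ?_) h
    calc ‖α i * (u : ℕ → K) i‖ * Real.sqrt ‖ω i‖
        = ‖α i‖ * (‖(u : ℕ → K) i‖ * Real.sqrt ‖ω i‖) := by rw [norm_mul]; ring
      _ ≤ C * (‖(u : ℕ → K) i‖ * Real.sqrt ‖ω i‖) :=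
          mul_le_mul_of_nonneg_right (hC i) (by positivity)⟩
  map_add' u v := by
    apply Subtype.ext
    funext i
    simp [mul_add]
  map_smul' c u := by
    apply Subtype.ext
    funext i
    simp [Pi.smul_apply, smul_eq_mul]
    ring

/-- If `S = {i | α i = μ}` is finite, then `N(μI − D)` is a
finite-dimensional `K`-vector space of dimension `card S`. -/
theorem stmt5 {K : Type*} [NontriviallyNormedField K] [CompleteSpace K]
    (hna : ∀ x y : K, ‖x + y‖ ≤ max ‖x‖ ‖y‖)
    (ω : ℕ → K) (hω : ∀ i, ω i ≠ 0)
    (α : ℕ → K) (hα : ∃ C, ∀ i, ‖α i‖ ≤ C) (μ : K)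
    (hS : {i : ℕ | α i = μ}.Finite) :
    FiniteDimensional K (LinearMap.ker (μ • LinearMap.id - diagOp ω α hα)) ∧
    Module.finrank K (LinearMap.ker (μ • LinearMap.id - diagOp ω α hα)) =
      {i : ℕ | α i = μ}.ncard := by
  classical
  set L : Eomega K ω →ₗ[K] Eomega K ω := μ • LinearMap.id - diagOp ω α hα with hL
  set T := LinearMap.ker L with hT
  have hLcoe : ∀ (u : Eomega K ω) (i : ℕ),
      ((L u : Eomega K ω) : ℕ → K) i = μ * (u : ℕ → K) i - α i * (u : ℕ → K) i := by
    intro u i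
    simp [hL, diagOp, LinearMap.sub_apply, LinearMap.smul_apply, Pi.smul_apply, smul_eq_mul]
  have hmem : ∀ u : Eomega K ω, u ∈ T ↔ ∀ i, α i ≠ μ → (u : ℕ → K) i = 0 := by
    intro u
    rw [hT, LinearMap.mem_ker]
    constructor
    · intro h i hi
      have h2 : ((L u : Eomega K ω) : ℕ → K) i = 0 := by rw [h]; rfl
      rw [hLcoe] at h2
      have h3 : (μ - α i) * (u : ℕ → K) i = 0 := by linear_combination h2
      rcases mul_eq_zero.1 h3 with h4 | h4
      · exact absurd (by linear_combination -h4) hi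
      · exact h4
    · intro h
      apply Subtype.ext
      funext i
      rw [hLcoe]
      by_cases hi : α i = μ
      · rw [hi]; ring_nf; rfl
      · simp [h i hi]
  set S := hS.toFinset with hSdef
  have hmemS : ∀ i, i ∈ S ↔ α i = μ := fun i => hS.mem_toFinset
  let f : T →ₗ[K] (S → K) :=
    { toFun := fun u i => ((u : Eomega K ω) : ℕ → K) i
      map_add' := fun u v => by funext i; rfl
      map_smul' := fun c u => by funext i; rfl }
  have hinj : Function.Injective f := by
    intro u v huv
    apply Subtype.ext; apply Subtype.ext; funext i
    by_cases hi : α i = μ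
    · exact congrFun huv ⟨i, (hmemS i).2 hi⟩
    · rw [(hmem ↑u).1 u.2 i hi, (hmem ↑v).1 v.2 i hi]
  have hsurj : Function.Surjective f := by
    intro g
    set w : ℕ → K := fun i => if h : i ∈ S then g ⟨i, h⟩ else 0 with hw
    have hwE : w ∈ Eomega K ω := by
      obtain ⟨N, hN⟩ : ∃ N, ∀ i ∈ S, i ≤ N := ⟨S.sup id, fun i hi => Finset.le_sup (f := id) hi⟩
      have hev : ∀ᶠ i in atTop, ‖w i‖ * Real.sqrt ‖ω i‖ = 0 := by
        filter_upwards [eventually_ge_atTop (N + 1)] with i hi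
        have hns : i ∉ S := fun h => absurd (hN i h) (by omega)
        simp [hw, hns]
      exact tendsto_const_nhds.congr' (hev.mono fun i h => h.symm)
    have hker : (⟨w, hwE⟩ : Eomega K ω) ∈ T := by
      rw [hmem]
      intro i hi
      have hns : i ∉ S := fun h => hi ((hmemS i).1 h)
      simp [hw, hns]
    refine ⟨⟨⟨w, hwE⟩, hker⟩, ?_⟩
    funext i
    show w (i : ℕ) = g i
    simp [hw, i.2]
  let e : T ≃ₗ[K] (S → K) := LinearEquiv.ofBijective f ⟨hinj, hsurj⟩
  have hfin : FiniteDimensional K T := Module.Finite.equiv e.symm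
  refine ⟨hfin, ?_⟩
  rw [e.finrank_eq, Module.finrank_fintype_fun_eq_card]
  rw [Fintype.card_coe]
  exact (Set.ncard_eq_toFinset_card _ hS).symm
end

section
/- Let D = D_α be the diagonal operator on E_ω associated with a bounded sequence α : ℕ → K, and let μ ∈ K. Assume μ is isolated from the other diagonal entries, i.e. there exists ε > 0 such that ‖μ − α_i‖ ≥ ε for every i with α_i ≠ μ. Then the range of μ·I − D is exactly R(μI − D) = { v ∈ E_ω : ∀ i ∈ ℕ, α_i = μ → v_i = 0 }, and in particular R(μI − D) is a closed subspace of E_ω. -/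
open Filter Topology

lemma Eomega.norm_def {K : Type*} [NontriviallyNormedField K] {ω : ℕ → K}
    (u : Eomega K ω) : ‖u‖ = ⨆ i, ‖(u : ℕ → K) i‖ * Real.sqrt ‖ω i‖ := rfl

lemma Eomega.apply_le {K : Type*} [NontriviallyNormedField K] {ω : ℕ → K}
    (u : Eomega K ω) (i : ℕ) : ‖(u : ℕ → K) i‖ * Real.sqrt ‖ω i‖ ≤ ‖u‖ :=
  le_ciSup (Eomega.bddAbove u) i

lemma Eomega.continuous_eval {K : Type*} [NontriviallyNormedField K] {ω : ℕ → K}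
    (i : ℕ) (hωi : ω i ≠ 0) :
    Continuous (fun u : Eomega K ω => (u : ℕ → K) i) := by
  have hpos : 0 < Real.sqrt ‖ω i‖ := Real.sqrt_pos.mpr (norm_pos_iff.mpr hωi)
  refine (LipschitzWith.of_dist_le_mul (K := Real.toNNReal (Real.sqrt ‖ω i‖)⁻¹)
    (fun u v => ?_)).continuous
  have h := Eomega.apply_le (u - v) i
  have hcoe : ((u - v : Eomega K ω) : ℕ → K) i = (u : ℕ → K) i - (v : ℕ → K) i := rfl
  rw [hcoe] at h
  have h2 : ‖(u : ℕ → K) i - (v : ℕ → K) i‖ ≤ ‖u - v‖ / Real.sqrt ‖ω i‖ :=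
    (le_div_iff₀ hpos).mpr h
  rw [dist_eq_norm, dist_eq_norm, Real.coe_toNNReal _ (by positivity)]
  calc ‖(u : ℕ → K) i - (v : ℕ → K) i‖ ≤ ‖u - v‖ / Real.sqrt ‖ω i‖ := h2
    _ = (Real.sqrt ‖ω i‖)⁻¹ * ‖u - v‖ := by ring

/-- If `μ` is isolated from the other diagonal entries, then the
range of `μI − D` is exactly `{v | α i = μ → v i = 0}`; in particular it is a
closed subspace of `E_ω`. -/
theorem stmt7 {K : Type*} [NontriviallyNormedField K] [CompleteSpace K]
    (hna : ∀ x y : K, ‖x + y‖ ≤ max ‖x‖ ‖y‖)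
    (ω : ℕ → K) (hω : ∀ i, ω i ≠ 0)
    (α : ℕ → K) (hα : ∃ C, ∀ i, ‖α i‖ ≤ C) (μ : K)
    (hiso : ∃ ε > 0, ∀ i : ℕ, α i ≠ μ → ε ≤ ‖μ - α i‖) :
    (LinearMap.range (μ • LinearMap.id - diagOp ω α hα) : Set (Eomega K ω)) =
      {v : Eomega K ω | ∀ i : ℕ, α i = μ → (v : ℕ → K) i = 0} ∧
    IsClosed (LinearMap.range (μ • LinearMap.id - diagOp ω α hα) : Set (Eomega K ω)) := by
  classical
  obtain ⟨ε, hε, hεiso⟩ := hiso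
  have hrange : (LinearMap.range (μ • LinearMap.id - diagOp ω α hα) : Set (Eomega K ω)) =
      {v : Eomega K ω | ∀ i : ℕ, α i = μ → (v : ℕ → K) i = 0} := by
    ext v
    constructor
    · rintro ⟨u, rfl⟩ i hi
      show μ * (u : ℕ → K) i - α i * (u : ℕ → K) i = 0
      rw [hi, sub_self]
    · intro hv
      set u : ℕ → K := fun i => if α i = μ then 0 else (μ - α i)⁻¹ * (v : ℕ → K) i with hu
      have humem : u ∈ Eomega K ω := by
        have h := v.2.const_mul ε⁻¹
        rw [mul_zero] at h
        refine squeeze_zero (fun i => by positivity) (fun i => ?_) h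
        by_cases hi : α i = μ
        · simp only [hu, if_pos hi, norm_zero, zero_mul]
          positivity
        · have hne : μ - α i ≠ 0 := sub_ne_zero.mpr (fun h' => hi h'.symm)
          have hle : ε ≤ ‖μ - α i‖ := hεiso i hi
          have : ‖u i‖ = ‖μ - α i‖⁻¹ * ‖(v : ℕ → K) i‖ := by
            simp [hu, hi, norm_mul]
          rw [this]
          have hinv : ‖μ - α i‖⁻¹ ≤ ε⁻¹ := inv_anti₀ hε hle
          calc ‖μ - α i‖⁻¹ * ‖(v : ℕ → K) i‖ * Real.sqrt ‖ω i‖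
              ≤ ε⁻¹ * ‖(v : ℕ → K) i‖ * Real.sqrt ‖ω i‖ := by gcongr
            _ = ε⁻¹ * (‖(v : ℕ → K) i‖ * Real.sqrt ‖ω i‖) := by ring
      refine ⟨⟨u, humem⟩, ?_⟩
      apply Subtype.ext
      funext i
      show μ * u i - α i * u i = (v : ℕ → K) i
      by_cases hi : α i = μ
      · simp [hu, hi, hv i hi]
      · have hne : μ - α i ≠ 0 := sub_ne_zero.mpr (fun h' => hi h'.symm)
        have : μ * u i - α i * u i = (μ - α i) * u i := by ring
        rw [this]
        simp only [hu, if_neg hi]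
        rw [← mul_assoc, mul_inv_cancel₀ hne, one_mul]
  refine ⟨hrange, ?_⟩
  rw [hrange]
  have heq : {v : Eomega K ω | ∀ i : ℕ, α i = μ → (v : ℕ → K) i = 0} =
      ⋂ i : ℕ, {v : Eomega K ω | α i = μ → (v : ℕ → K) i = 0} := by
    ext v; simp [Set.mem_iInter]
  rw [heq]
  refine isClosed_iInter fun i => ?_
  by_cases hi : α i = μ
  · have : {v : Eomega K ω | α i = μ → (v : ℕ → K) i = 0} =
        (fun v : Eomega K ω => (v : ℕ → K) i) ⁻¹' {0} := by
      ext v; simp [hi]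
    rw [this]
    exact IsClosed.preimage (Eomega.continuous_eval i (hω i)) isClosed_singleton
  · have : {v : Eomega K ω | α i = μ → (v : ℕ → K) i = 0} = Set.univ := by
      ext v; simp [hi]
    rw [this]
    exact isClosed_univ
end

section
/- Let D = D_α be the diagonal operator on E_ω associated with a bounded sequence α : ℕ → K, and let μ ∈ K be an eigenvalue of D of finite multiplicity (the set { i : α_i = μ } is nonempty and finite) that is isolated from the other diagonal entries (there exists ε > 0 with ‖μ − α_i‖ ≥ ε for every i with α_i ≠ μ). Then R(μI − D) = N(μI − D)^⊥, where the orthogonal is taken with respect to the bilinear form ⟨u, v⟩ = Σ_{i=0}^∞ ω_i u_i v_i; in particular R(μI − D) is closed in E_ω. -/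
open Filter Topology

/-- The bilinear pairing `⟨u,v⟩ = Σ'_i ω i * u i * v i` on `E_ω`. -/
noncomputable def pair {K : Type*} [NontriviallyNormedField K] (ω : ℕ → K)
    (u v : Eomega K ω) : K :=
  ∑' i, ω i * ((u : ℕ → K) i * (v : ℕ → K) i)

/-- The orthogonal set `F^⊥` of a subspace `F` of `E_ω` with respect to the
pairing `⟨·,·⟩`. -/
def orthSet {K : Type*} [NontriviallyNormedField K] (ω : ℕ → K)
    (F : Submodule K (Eomega K ω)) : Set (Eomega K ω) :=
  {v | ∀ u ∈ F, pair ω u v = 0}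

/-- If `μ` is an eigenvalue of `D` of finite multiplicity which
is isolated from the other diagonal entries, then
`R(μI − D) = N(μI − D)^⊥`; in particular `R(μI − D)` is closed in `E_ω`. -/
theorem stmt10 {K : Type*} [NontriviallyNormedField K] [CompleteSpace K]
    (hna : ∀ x y : K, ‖x + y‖ ≤ max ‖x‖ ‖y‖)
    (ω : ℕ → K) (hω : ∀ i, ω i ≠ 0)
    (α : ℕ → K) (hα : ∃ C, ∀ i, ‖α i‖ ≤ C) (μ : K)
    (hS : {i : ℕ | α i = μ}.Nonempty) (hSfin : {i : ℕ | α i = μ}.Finite)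
    (hiso : ∃ ε > 0, ∀ i : ℕ, α i ≠ μ → ε ≤ ‖μ - α i‖) :
    (LinearMap.range (μ • LinearMap.id - diagOp ω α hα) : Set (Eomega K ω)) =
      orthSet ω (LinearMap.ker (μ • LinearMap.id - diagOp ω α hα)) ∧
    IsClosed (LinearMap.range (μ • LinearMap.id - diagOp ω α hα) : Set (Eomega K ω)) := by
  classical
  obtain ⟨ε, hε, hsep⟩ := hiso
  set T := μ • (LinearMap.id : Eomega K ω →ₗ[K] Eomega K ω) - diagOp ω α hα with hT
  have hTapp : ∀ (u : Eomega K ω) (i : ℕ),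
      ((T u : Eomega K ω) : ℕ → K) i = (μ - α i) * (u : ℕ → K) i := by
    intro u i
    show μ * (u : ℕ → K) i - α i * (u : ℕ → K) i = (μ - α i) * (u : ℕ → K) i
    ring
  -- characterization of the kernel
  have hker : ∀ u : Eomega K ω,
      u ∈ LinearMap.ker T ↔ ∀ i, α i ≠ μ → (u : ℕ → K) i = 0 := by
    intro u
    rw [LinearMap.mem_ker]
    constructor
    · intro h i hi
      have h0 : ((T u : Eomega K ω) : ℕ → K) i = 0 := by rw [h]; rfl
      rw [hTapp] at h0
      have hne : μ - α i ≠ 0 := sub_ne_zero.mpr (Ne.symm hi)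
      exact (mul_eq_zero.mp h0).resolve_left hne
    · intro h
      apply Subtype.ext
      funext i
      rw [hTapp]
      by_cases hi : α i = μ
      · rw [hi, sub_self, zero_mul]; rfl
      · rw [h i hi, mul_zero]; rfl
  -- the range equals the set Z of sequences vanishing on S
  have hrange : (LinearMap.range T : Set (Eomega K ω)) =
      {v : Eomega K ω | ∀ i, α i = μ → (v : ℕ → K) i = 0} := by
    ext v
    constructor
    · rintro ⟨u, rfl⟩ i hi
      rw [hTapp, hi, sub_self, zero_mul]
    · intro hv
      have hmem : (fun i => if α i = μ then 0 else (μ - α i)⁻¹ * (v : ℕ → K) i) ∈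
          Eomega K ω := by
        have h := v.2.const_mul ε⁻¹
        rw [mul_zero] at h
        refine squeeze_zero (fun i => by positivity) (fun i => ?_) h
        by_cases hi : α i = μ
        · simp only [hi, if_pos rfl]
          have : ε⁻¹ * (‖(v : ℕ → K) i‖ * Real.sqrt ‖ω i‖) ≥ 0 := by positivity
          simpa using this
        · simp only [if_neg hi]
          have hb : ‖(μ - α i)⁻¹ * (v : ℕ → K) i‖ ≤ ε⁻¹ * ‖(v : ℕ → K) i‖ := by
            rw [norm_mul, norm_inv]
            have h1 : ‖μ - α i‖⁻¹ ≤ ε⁻¹ := by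
              apply inv_anti₀ hε (hsep i hi)
            exact mul_le_mul_of_nonneg_right h1 (norm_nonneg _)
          calc ‖(μ - α i)⁻¹ * (v : ℕ → K) i‖ * Real.sqrt ‖ω i‖
              ≤ ε⁻¹ * ‖(v : ℕ → K) i‖ * Real.sqrt ‖ω i‖ :=
                mul_le_mul_of_nonneg_right hb (Real.sqrt_nonneg _)
            _ = ε⁻¹ * (‖(v : ℕ → K) i‖ * Real.sqrt ‖ω i‖) := by ring
      refine ⟨⟨_, hmem⟩, ?_⟩
      apply Subtype.ext
      funext i
      rw [hTapp]
      by_cases hi : α i = μ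
      · simp only [if_pos hi, mul_zero]
        exact (hv i hi).symm
      · have hne : μ - α i ≠ 0 := sub_ne_zero.mpr (fun h => hi h.symm)
        simp only [if_neg hi]
        rw [← mul_assoc, mul_inv_cancel₀ hne, one_mul]
  -- the orthogonal of the kernel equals Z as well
  have horth : orthSet ω (LinearMap.ker T) =
      {v : Eomega K ω | ∀ i, α i = μ → (v : ℕ → K) i = 0} := by
    ext v
    constructor
    · intro hv i hi
      have hemem : (Pi.single i (1 : K) : ℕ → K) ∈ Eomega K ω := by
        have : ∀ᶠ j in atTop, ‖(Pi.single i (1 : K) : ℕ → K) j‖ * Real.sqrt ‖ω j‖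
            = (0 : ℝ) := by
          filter_upwards [eventually_gt_atTop i] with j hj
          rw [Pi.single_eq_of_ne (Nat.ne_of_gt hj)]
          simp
        exact (tendsto_const_nhds : Tendsto (fun _ : ℕ => (0:ℝ)) atTop (𝓝 0)).congr'
          (this.mono fun j hj => hj.symm)
      set e : Eomega K ω := ⟨Pi.single i (1 : K), hemem⟩ with he
      have hek : e ∈ LinearMap.ker T := by
        rw [hker]
        intro j hj
        have hji : j ≠ i := fun h => hj (h ▸ hi)
        exact Pi.single_eq_of_ne hji 1
      have h0 := hv e hek
      unfold pair at h0
      rw [tsum_eq_single i ?_] at h0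
      · have : ω i * ((1 : K) * (v : ℕ → K) i) = 0 := by
          simpa [he, Pi.single_eq_same] using h0
        rcases mul_eq_zero.mp this with h | h
        · exact absurd h (hω i)
        · rcases mul_eq_zero.mp h with h' | h'
          · exact absurd h' one_ne_zero
          · exact h'
      · intro j hj
        have : (e : ℕ → K) j = 0 := Pi.single_eq_of_ne hj 1
        rw [this, zero_mul, mul_zero]
    · intro hv u hu
      unfold pair
      have hzero : (fun j => ω j * ((u : ℕ → K) j * (v : ℕ → K) j)) = fun _ => 0 := by
        funext j
        by_cases hj : α j = μ
        · rw [hv j hj, mul_zero, mul_zero]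
        · rw [(hker u).mp hu j hj, zero_mul, mul_zero]
      rw [hzero, tsum_zero]
  -- continuity of coordinate evaluations
  have hnorm : ∀ v : Eomega K ω,
      ‖v‖ = ⨆ i, ‖(v : ℕ → K) i‖ * Real.sqrt ‖ω i‖ := fun v => rfl
  have hcont : ∀ j : ℕ, Continuous fun v : Eomega K ω => (v : ℕ → K) j := by
    intro j
    have hsq : 0 < Real.sqrt ‖ω j‖ := Real.sqrt_pos.mpr (norm_pos_iff.mpr (hω j))
    let f : Eomega K ω →+ K :=
      { toFun := fun v => (v : ℕ → K) j
        map_zero' := rfl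
        map_add' := fun u v => rfl }
    have hb : ∀ v : Eomega K ω, ‖f v‖ ≤ (Real.sqrt ‖ω j‖)⁻¹ * ‖v‖ := by
      intro v
      have h1 : ‖(v : ℕ → K) j‖ * Real.sqrt ‖ω j‖ ≤ ‖v‖ := by
        rw [hnorm]
        exact le_ciSup (Eomega.bddAbove v) j
      rw [inv_mul_eq_div, le_div_iff₀ hsq]
      exact h1
    exact AddMonoidHomClass.continuous_of_bound f _ hb
  have hclosed : IsClosed {v : Eomega K ω | ∀ i, α i = μ → (v : ℕ → K) i = 0} := by
    have : {v : Eomega K ω | ∀ i, α i = μ → (v : ℕ → K) i = 0} =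
        ⋂ i : ℕ, {v : Eomega K ω | α i = μ → (v : ℕ → K) i = 0} := by
      ext v; simp [Set.mem_iInter]
    rw [this]
    refine isClosed_iInter fun i => ?_
    by_cases hi : α i = μ
    · have : {v : Eomega K ω | α i = μ → (v : ℕ → K) i = 0} =
          (fun v : Eomega K ω => (v : ℕ → K) i) ⁻¹' {0} := by
        ext v; simp [hi]
      rw [this]
      exact IsClosed.preimage (hcont i) isClosed_singleton
    · have : {v : Eomega K ω | α i = μ → (v : ℕ → K) i = 0} = Set.univ := by
        ext v; simp [hi]
      rw [this]
      exact isClosed_univ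
  exact ⟨hrange.trans horth.symm, hrange ▸ hclosed⟩
end

section
/- Let D = D_α be the diagonal operator on E_ω associated with a bounded sequence α : ℕ → K, and let Λ = { α_i : i ∈ ℕ } be the set of its diagonal entries. Then the proper essential spectrum of D equals the boundary set of Λ: σ'_e(D) = closure(Λ) \ Λ. -/
open Filter Topology

/-- The spectrum of `D`: those `μ` such that `μ·I − D` has no bounded (i.e.
continuous) two-sided inverse. -/
def specSet {K : Type*} [NontriviallyNormedField K] {ω : ℕ → K}
    (D : Eomega K ω →ₗ[K] Eomega K ω) : Set K :=
  {μ | ¬ ∃ S : Eomega K ω →ₗ[K] Eomega K ω, Continuous S ∧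
        S ∘ₗ (μ • LinearMap.id - D) = LinearMap.id ∧
        (μ • LinearMap.id - D) ∘ₗ S = LinearMap.id}

/-- The proper essential spectrum of `D`: those `μ` in the spectrum such that
`μ·I − D` is injective but not surjective. -/
def properEssSpec {K : Type*} [NontriviallyNormedField K] {ω : ℕ → K}
    (D : Eomega K ω →ₗ[K] Eomega K ω) : Set K :=
  {μ | μ ∈ specSet D ∧
       Function.Injective
         ⇑(μ • (LinearMap.id : Eomega K ω →ₗ[K] Eomega K ω) - D) ∧
       ¬ Function.Surjective
         ⇑(μ • (LinearMap.id : Eomega K ω →ₗ[K] Eomega K ω) - D)}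

section Aux

variable {K : Type*} [NontriviallyNormedField K]

lemma norm_between (B : ℝ) (hB : ∃ b : K, ‖b‖ = B ∧ 1 < B) (r : ℝ) (hr : 0 < r) :
    ∃ x : K, r ≤ ‖x‖ ∧ ‖x‖ ≤ B * r := by
  obtain ⟨b, rfl, hb⟩ := hB
  obtain ⟨n, hn1, hn2⟩ := exists_mem_Ico_zpow hr hb
  refine ⟨b ^ (n + 1), ?_, ?_⟩
  · rw [norm_zpow]; exact hn2.le
  · rw [norm_zpow]
    calc ‖b‖ ^ (n + 1) = ‖b‖ ^ n * ‖b‖ := by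
          rw [zpow_add₀ (by positivity : (0:ℝ) < ‖b‖).ne' n 1, zpow_one]
      _ ≤ r * ‖b‖ := mul_le_mul_of_nonneg_right hn1 (by positivity)
      _ = ‖b‖ * r := mul_comm _ _

lemma Tapply (ω : ℕ → K) (α : ℕ → K) (hα : ∃ C, ∀ i, ‖α i‖ ≤ C) (μ : K)
    (u : Eomega K ω) (i : ℕ) :
    (((μ • (LinearMap.id : Eomega K ω →ₗ[K] Eomega K ω) - diagOp ω α hα) u : Eomega K ω) : ℕ → K) i
      = (μ - α i) * (u : ℕ → K) i := by
  simp [diagOp, sub_mul]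

end Aux

/-- The proper essential spectrum of `D` equals the boundary set
of `Λ = {α i : i ∈ ℕ}`: `σ'_e(D) = closure(Λ) \\ Λ`. -/
theorem stmt12 {K : Type*} [NontriviallyNormedField K] [CompleteSpace K]
    (hna : ∀ x y : K, ‖x + y‖ ≤ max ‖x‖ ‖y‖)
    (ω : ℕ → K) (hω : ∀ i, ω i ≠ 0)
    (α : ℕ → K) (hα : ∃ C, ∀ i, ‖α i‖ ≤ C) :
    properEssSpec (diagOp ω α hα) = closure (Set.range α) \ Set.range α := by
  classical
  ext μ
  simp only [properEssSpec, specSet, Set.mem_setOf_eq, Set.mem_diff]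
  set T := μ • (LinearMap.id : Eomega K ω →ₗ[K] Eomega K ω) - diagOp ω α hα with hTdef
  have hTap : ∀ (u : Eomega K ω) (i : ℕ),
      ((T u : Eomega K ω) : ℕ → K) i = (μ - α i) * (u : ℕ → K) i :=
    fun u i => Tapply ω α hα μ u i
  have hsqrt : ∀ i, 0 < Real.sqrt ‖ω i‖ :=
    fun i => Real.sqrt_pos.mpr (norm_pos_iff.mpr (hω i))
  constructor
  · rintro ⟨hspec, hinj, hsurj⟩
    constructor
    · -- μ ∈ closure (range α)
      by_contra hcl
      rw [Metric.mem_closure_iff] at hcl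
      push_neg at hcl
      obtain ⟨δ, hδ, hδ2⟩ := hcl
      have hδ2' : ∀ i, δ ≤ ‖μ - α i‖ := by
        intro i
        have := hδ2 (α i) (Set.mem_range_self i)
        rwa [dist_eq_norm] at this
      apply hsurj
      intro u
      have hne : ∀ i, μ - α i ≠ 0 := fun i => by
        intro h
        have := hδ2' i
        rw [h, norm_zero] at this
        linarith
      refine ⟨⟨fun i => (μ - α i)⁻¹ * (u : ℕ → K) i, ?_⟩, ?_⟩
      · have h := u.2.const_mul δ⁻¹
        rw [mul_zero] at h
        refine squeeze_zero (fun i => by positivity) (fun i => ?_) h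
        have h1 : ‖(μ - α i)⁻¹ * (u : ℕ → K) i‖ = ‖μ - α i‖⁻¹ * ‖(u : ℕ → K) i‖ := by
          rw [norm_mul, norm_inv]
        rw [h1]
        have h2 : ‖μ - α i‖⁻¹ ≤ δ⁻¹ := by
          apply inv_anti₀ hδ (hδ2' i)
        nlinarith [norm_nonneg ((u : ℕ → K) i), Real.sqrt_nonneg ‖ω i‖,
          mul_nonneg (norm_nonneg ((u : ℕ → K) i)) (Real.sqrt_nonneg ‖ω i‖)]
      · apply Subtype.ext
        funext i
        rw [hTap]
        exact mul_inv_cancel_left₀ (hne i) _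
    · -- μ ∉ range α
      rintro ⟨j, rfl⟩
      have hmem : (Pi.single j (1:K) : ℕ → K) ∈ Eomega K ω := by
        have hev : (fun i => ‖(Pi.single j (1:K) : ℕ → K) i‖ * Real.sqrt ‖ω i‖)
            =ᶠ[Filter.atTop] fun _ => (0:ℝ) := by
          refine Filter.eventually_atTop.mpr ⟨j + 1, fun i hi => ?_⟩
          simp [Pi.single_eq_of_ne (by omega : i ≠ j)]
        exact (tendsto_congr' hev).mpr tendsto_const_nhds
      set e : Eomega K ω := ⟨Pi.single j (1:K), hmem⟩ with he
      have hTe : T e = 0 := by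
        apply Subtype.ext
        funext i
        rw [hTap]
        by_cases hij : i = j
        · subst hij; simp
        · simp [he, Pi.single_apply, hij]
      have : e = 0 := hinj (by rw [hTe, map_zero])
      have h1 : (Pi.single j (1:K) : ℕ → K) j = 0 := by
        have := congrArg (fun v : Eomega K ω => (v : ℕ → K) j) this
        simpa [he] using this
      rw [Pi.single_eq_same] at h1
      exact one_ne_zero h1
  · rintro ⟨hcl, hnr⟩
    have hne : ∀ i, μ - α i ≠ 0 := by
      intro i h
      exact hnr ⟨i, (sub_eq_zero.mp h).symm⟩
    have hpos : ∀ i, 0 < ‖μ - α i‖ := fun i => norm_pos_iff.mpr (hne i)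
    -- step: indices with small ‖μ - α i‖ occur arbitrarily far out
    have hstep : ∀ N : ℕ, ∀ ε : ℝ, 0 < ε → ∃ i, N ≤ i ∧ ‖μ - α i‖ < ε := by
      intro N ε hε
      have hfin : ∃ δ > (0:ℝ), ∀ i < N, δ ≤ ‖μ - α i‖ := by
        induction N with
        | zero => exact ⟨1, one_pos, fun i hi => absurd hi (Nat.not_lt_zero i)⟩
        | succ n ih =>
          obtain ⟨δ, hδ, hδ2⟩ := ih
          refine ⟨min δ ‖μ - α n‖, lt_min hδ (hpos n), fun i hi => ?_⟩
          rcases Nat.lt_succ_iff_lt_or_eq.mp hi with h' | h'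
          · exact le_trans (min_le_left _ _) (hδ2 i h')
          · subst h'; exact min_le_right _ _
      obtain ⟨δ, hδ, hδ2⟩ := hfin
      have hcl' := Metric.mem_closure_iff.mp hcl (min ε δ) (lt_min hε hδ)
      obtain ⟨y, ⟨i, rfl⟩, hy⟩ := hcl'
      rw [dist_eq_norm] at hy
      refine ⟨i, ?_, lt_of_lt_of_le hy (min_le_left _ _)⟩
      by_contra hNi
      push_neg at hNi
      exact absurd (lt_of_lt_of_le hy (min_le_right _ _)) (not_lt.mpr (hδ2 i hNi))
    have hstep' : ∀ k N : ℕ, ∃ i, N ≤ i ∧ ‖μ - α i‖ < 1 / (k + 1) :=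
      fun k N => hstep N (1 / (k + 1)) (by positivity)
    -- strictly increasing sequence of indices
    set φ : ℕ → ℕ := fun k =>
      Nat.rec (hstep' 0 0).choose (fun k ih => (hstep' (k + 1) (ih + 1)).choose) k with hφdef
    have hφsucc : ∀ k, φ (k + 1) = (hstep' (k + 1) (φ k + 1)).choose := fun k => rfl
    have hφmono : StrictMono φ := by
      apply strictMono_nat_of_lt_succ
      intro k
      have := (hstep' (k + 1) (φ k + 1)).choose_spec.1
      rw [hφsucc]
      omega
    have hφsmall : ∀ k, ‖μ - α (φ k)‖ < 1 / (k + 1) := by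
      intro k
      cases k with
      | zero => exact (hstep' 0 0).choose_spec.2
      | succ n => rw [hφsucc]; exact (hstep' (n + 1) (φ n + 1)).choose_spec.2
    -- the norm-realizing elements
    obtain ⟨b, hb⟩ := NormedField.exists_one_lt_norm K
    have hc : ∀ i : ℕ, ∃ x : K,
        ‖μ - α i‖ / Real.sqrt ‖ω i‖ ≤ ‖x‖ ∧ ‖x‖ ≤ ‖b‖ * (‖μ - α i‖ / Real.sqrt ‖ω i‖) :=
      fun i => norm_between ‖b‖ ⟨b, rfl, hb⟩ _ (div_pos (hpos i) (hsqrt i))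
    set c : ℕ → K := fun i => (hc i).choose with hcdef
    set u : ℕ → K := fun i => if ∃ k, φ k = i then c i else 0 with hudef
    have humem : u ∈ Eomega K ω := by
      show Filter.Tendsto (fun i => ‖u i‖ * Real.sqrt ‖ω i‖) Filter.atTop (nhds 0)
      rw [Metric.tendsto_atTop]
      intro ε hε
      obtain ⟨k0, hk0⟩ := exists_nat_gt (‖b‖ / ε)
      refine ⟨φ k0 + 1, fun i hi => ?_⟩
      rw [Real.dist_eq, sub_zero, abs_of_nonneg (mul_nonneg (norm_nonneg _) (Real.sqrt_nonneg _))]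
      by_cases hr : ∃ k, φ k = i
      · obtain ⟨m, rfl⟩ := hr
        have hmk : k0 < m := by
          by_contra hmk
          push_neg at hmk
          have := hφmono.le_iff_le.mpr hmk
          omega
        have h1 : ‖u (φ m)‖ = ‖c (φ m)‖ := by
          rw [hudef]
          simp only [if_pos (show ∃ k, φ k = φ m from ⟨m, rfl⟩)]
        have h2 := (hc (φ m)).choose_spec.2
        have h3 := hφsmall m
        have hbpos : (0:ℝ) < ‖b‖ := by linarith
        have h4 : ‖u (φ m)‖ * Real.sqrt ‖ω (φ m)‖ ≤ ‖b‖ * ‖μ - α (φ m)‖ := by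
          rw [h1]
          have := mul_le_mul_of_nonneg_right h2 (Real.sqrt_nonneg ‖ω (φ m)‖)
          rwa [mul_assoc, div_mul_cancel₀ _ (hsqrt (φ m)).ne'] at this
        have h5 : ‖b‖ * ‖μ - α (φ m)‖ < ‖b‖ * (1 / (m + 1)) :=
          mul_lt_mul_of_pos_left h3 hbpos
        have h6 : ‖b‖ * (1 / ((m:ℝ) + 1)) < ε := by
          rw [div_lt_iff₀ hε] at hk0
          have hm1 : (k0:ℝ) + 1 ≤ (m:ℝ) + 1 := by
            have : (k0:ℝ) ≤ m := Nat.cast_le.mpr hmk.le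
            linarith
          have hk0pos : (0:ℝ) < (k0:ℝ) + 1 := by positivity
          have : ‖b‖ * (1 / ((m:ℝ) + 1)) ≤ ‖b‖ * (1 / ((k0:ℝ) + 1)) := by
            apply mul_le_mul_of_nonneg_left _ hbpos.le
            apply div_le_div_of_nonneg_left one_pos.le hk0pos hm1
          calc ‖b‖ * (1 / ((m:ℝ) + 1)) ≤ ‖b‖ * (1 / ((k0:ℝ) + 1)) := this
            _ < ε := by
              rw [mul_one_div, div_lt_iff₀ hk0pos]
              calc ‖b‖ < (k0:ℝ) * ε := hk0
                _ = ε * (k0:ℝ) := mul_comm _ _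
                _ ≤ ε * ((k0:ℝ) + 1) := by nlinarith
        linarith
      · rw [hudef]
        simp only [if_neg hr, norm_zero, zero_mul]
        exact hε
    -- not surjective
    have hnsurj : ¬ Function.Surjective ⇑T := by
      intro hsurj
      obtain ⟨w, hw⟩ := hsurj ⟨u, humem⟩
      have hwt : Filter.Tendsto (fun i => ‖(w : ℕ → K) i‖ * Real.sqrt ‖ω i‖)
          Filter.atTop (nhds 0) := w.2
      rw [Metric.tendsto_atTop] at hwt
      obtain ⟨N, hN⟩ := hwt 1 one_pos
      set i := φ N with hidef
      have hiN : N ≤ i := hφmono.le_apply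
      have h0 := hN i hiN
      rw [Real.dist_eq, sub_zero, abs_of_nonneg (by positivity)] at h0
      have hwi : (μ - α i) * (w : ℕ → K) i = u i := by
        have := congrArg (fun v : Eomega K ω => (v : ℕ → K) i) hw
        simp only at this
        rw [← this, hTap]
      have hui : u i = c i := by
        rw [hudef]
        simp only [if_pos (show ∃ k, φ k = i from ⟨N, hidef.symm⟩)]
      have hclb := (hc i).choose_spec.1
      have hnormw : ‖(w : ℕ → K) i‖ * ‖μ - α i‖ = ‖c i‖ := by
        rw [← norm_mul, mul_comm ((w : ℕ → K) i), hwi, hui]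
      have h1 : ‖μ - α i‖ / Real.sqrt ‖ω i‖ ≤ ‖(w : ℕ → K) i‖ * ‖μ - α i‖ := by
        rw [hnormw]; exact hclb
      have h2 : (1:ℝ) ≤ ‖(w : ℕ → K) i‖ * Real.sqrt ‖ω i‖ := by
        have hs := hsqrt i
        have hp := hpos i
        rw [div_le_iff₀ hs] at h1
        nlinarith
      linarith
    refine ⟨?_, ?_, hnsurj⟩
    · -- spectrum membership
      rintro ⟨S, _, _, hright⟩
      apply hnsurj
      intro v
      refine ⟨S v, ?_⟩
      have := congrArg (fun f : Eomega K ω →ₗ[K] Eomega K ω => f v) hright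
      simpa using this
    · -- injective
      intro a b' hab
      have h0 : T (a - b') = 0 := by rw [map_sub, hab, sub_self]
      have : a - b' = 0 := by
        apply Subtype.ext
        funext i
        have := congrArg (fun v : Eomega K ω => (v : ℕ → K) i) h0
        rw [hTap] at this
        have h2 := mul_eq_zero.mp this
        rcases h2 with h2 | h2
        · exact absurd h2 (hne i)
        · simpa using h2
      have := sub_eq_zero.mp this
      exact this
end

section
/- Let D = D_α be the diagonal operator on E_ω associated with a bounded sequence α : ℕ → K, and let μ ∈ K. If μ does not belong to the closure of Λ = { α_i : i ∈ ℕ } in K (equivalently, there exists ε > 0 with ‖μ − α_i‖ ≥ ε for all i ∈ ℕ), then μI − D is bijective and has a bounded inverse; in particular μ ∉ σ(D). -/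
open Filter Topology

/-- If `μ` does not lie in the closure of `Λ = {α i : i ∈ ℕ}`,
then `μI − D` is bijective with a bounded inverse; in particular `μ ∉ σ(D)`. -/
theorem stmt13 {K : Type*} [NontriviallyNormedField K] [CompleteSpace K]
    (hna : ∀ x y : K, ‖x + y‖ ≤ max ‖x‖ ‖y‖)
    (ω : ℕ → K) (hω : ∀ i, ω i ≠ 0)
    (α : ℕ → K) (hα : ∃ C, ∀ i, ‖α i‖ ≤ C) (μ : K)
    (hμ : μ ∉ closure (Set.range α)) :
    Function.Bijective
      ⇑(μ • (LinearMap.id : Eomega K ω →ₗ[K] Eomega K ω) - diagOp ω α hα) ∧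
    (∃ S : Eomega K ω →ₗ[K] Eomega K ω, Continuous S ∧
      S ∘ₗ (μ • LinearMap.id - diagOp ω α hα) = LinearMap.id ∧
      (μ • LinearMap.id - diagOp ω α hα) ∘ₗ S = LinearMap.id) ∧
    μ ∉ specSet (diagOp ω α hα) := by
  -- extract a uniform lower bound ε
  have hex : ∃ ε > (0:ℝ), ∀ i, ε ≤ ‖μ - α i‖ := by
    rw [Metric.mem_closure_iff] at hμ
    push_neg at hμ
    obtain ⟨ε, hε, h⟩ := hμ
    exact ⟨ε, hε, fun i => by simpa [dist_eq_norm] using h (α i) ⟨i, rfl⟩⟩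
  obtain ⟨ε, hε, hεle⟩ := hex
  have hne : ∀ i, μ - α i ≠ 0 := by
    intro i h
    have := hεle i
    rw [h, norm_zero] at this
    linarith
  have hβbdd : ∃ C, ∀ i, ‖(fun i => (μ - α i)⁻¹) i‖ ≤ C := by
    refine ⟨ε⁻¹, fun i => ?_⟩
    rw [norm_inv]
    exact inv_anti₀ hε (hεle i)
  set S : Eomega K ω →ₗ[K] Eomega K ω := diagOp ω (fun i => (μ - α i)⁻¹) hβbdd with hS
  set T : Eomega K ω →ₗ[K] Eomega K ω :=
    μ • (LinearMap.id : Eomega K ω →ₗ[K] Eomega K ω) - diagOp ω α hα with hT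
  have hTapp : ∀ (u : Eomega K ω) (i : ℕ),
      ((T u : Eomega K ω) : ℕ → K) i = (μ - α i) * (u : ℕ → K) i := by
    intro u i
    simp [hT, diagOp, sub_mul]
  have hSapp : ∀ (u : Eomega K ω) (i : ℕ),
      ((S u : Eomega K ω) : ℕ → K) i = (μ - α i)⁻¹ * (u : ℕ → K) i := by
    intro u i
    simp [hS, diagOp]
  have hST : S ∘ₗ T = LinearMap.id := by
    apply LinearMap.ext
    intro u
    apply Subtype.ext
    funext i
    rw [LinearMap.comp_apply, hSapp, hTapp]
    exact inv_mul_cancel_left₀ (hne i) _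
  have hTS : T ∘ₗ S = LinearMap.id := by
    apply LinearMap.ext
    intro u
    apply Subtype.ext
    funext i
    rw [LinearMap.comp_apply, hTapp, hSapp]
    exact mul_inv_cancel_left₀ (hne i) _
  have hnorm : ∀ u : Eomega K ω, ‖u‖ = ⨆ i, ‖(u : ℕ → K) i‖ * Real.sqrt ‖ω i‖ :=
    fun u => rfl
  have hle : ∀ (u : Eomega K ω) i, ‖(u : ℕ → K) i‖ * Real.sqrt ‖ω i‖ ≤ ‖u‖ := by
    intro u i
    rw [hnorm]
    exact le_ciSup (Eomega.bddAbove u) i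
  have hcont : Continuous S := by
    refine AddMonoidHomClass.continuous_of_bound S ε⁻¹ (fun u => ?_)
    rw [hnorm]
    refine ciSup_le fun i => ?_
    rw [hSapp, norm_mul, norm_inv, mul_assoc]
    have h1 : ‖μ - α i‖⁻¹ ≤ ε⁻¹ := inv_anti₀ hε (hεle i)
    have h2 : ‖(u : ℕ → K) i‖ * Real.sqrt ‖ω i‖ ≤ ‖u‖ := hle u i
    have h3 : (0:ℝ) ≤ ‖(u : ℕ → K) i‖ * Real.sqrt ‖ω i‖ := by positivity
    calc ‖μ - α i‖⁻¹ * (‖(u : ℕ → K) i‖ * Real.sqrt ‖ω i‖)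
        ≤ ε⁻¹ * (‖(u : ℕ → K) i‖ * Real.sqrt ‖ω i‖) :=
          mul_le_mul_of_nonneg_right h1 h3
      _ ≤ ε⁻¹ * ‖u‖ := mul_le_mul_of_nonneg_left h2 (by positivity)
  have hSTfun : ∀ u, S (T u) = u := fun u => DFunLike.congr_fun hST u
  have hTSfun : ∀ u, T (S u) = u := fun u => DFunLike.congr_fun hTS u
  refine ⟨⟨Function.LeftInverse.injective hSTfun,
    Function.RightInverse.surjective hTSfun⟩, ⟨S, hcont, hST, hTS⟩, ?_⟩
  intro hcontra
  exact hcontra ⟨S, hcont, hST, hTS⟩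
end

section
/- Let D = D_α be a diagonal operator on E_ω of finite rank, i.e. the set { i ∈ ℕ : α_i ≠ 0 } is finite. Then the spectrum of D is finite and equals the point spectrum: σ(D) = σ_p(D) = { α_i : i ∈ ℕ }. -/
open Filter Topology

/-- The point spectrum of `D`: the set of eigenvalues, i.e. the `μ` with
`N(μI − D) ≠ {0}`. -/
def pointSpec {K : Type*} [NontriviallyNormedField K] {ω : ℕ → K}
    (D : Eomega K ω →ₗ[K] Eomega K ω) : Set K :=
  {μ | LinearMap.ker (μ • LinearMap.id - D) ≠ ⊥}


lemma diagOp_apply_coe {K : Type*} [NontriviallyNormedField K] (ω : ℕ → K) (α : ℕ → K)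
    (hα : ∃ C, ∀ i, ‖α i‖ ≤ C) (u : Eomega K ω) (i : ℕ) :
    ((diagOp ω α hα u : Eomega K ω) : ℕ → K) i = α i * (u : ℕ → K) i := rfl

lemma resolvent_apply_coe {K : Type*} [NontriviallyNormedField K] {ω : ℕ → K} (α : ℕ → K)
    (hα : ∃ C, ∀ i, ‖α i‖ ≤ C) (μ : K) (u : Eomega K ω) (i : ℕ) :
    (((μ • LinearMap.id - diagOp ω α hα : Eomega K ω →ₗ[K] Eomega K ω) u : Eomega K ω) : ℕ → K) i
      = (μ - α i) * (u : ℕ → K) i := by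
  simp [diagOp, sub_mul]

/-- If `D` has finite rank (i.e. `{i | α i ≠ 0}` is finite),
then the spectrum of `D` is finite and equals the point spectrum, which is the
set `{α i : i ∈ ℕ}`. -/
theorem stmt14 {K : Type*} [NontriviallyNormedField K] [CompleteSpace K]
    (hna : ∀ x y : K, ‖x + y‖ ≤ max ‖x‖ ‖y‖)
    (ω : ℕ → K) (hω : ∀ i, ω i ≠ 0)
    (α : ℕ → K) (hα : ∃ C, ∀ i, ‖α i‖ ≤ C)
    (hfin : {i : ℕ | α i ≠ 0}.Finite) :
    (specSet (diagOp ω α hα)).Finite ∧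
    specSet (diagOp ω α hα) = pointSpec (diagOp ω α hα) ∧
    specSet (diagOp ω α hα) = Set.range α := by
  classical
  -- range α is finite
  have hrange : (Set.range α).Finite := by
    apply Set.Finite.subset ((hfin.image α).union (Set.finite_singleton 0))
    rintro x ⟨i, rfl⟩
    by_cases h : α i = 0
    · exact Or.inr (by simp [h])
    · exact Or.inl ⟨i, h, rfl⟩
  -- range α ⊆ pointSpec
  have h1 : Set.range α ⊆ pointSpec (diagOp ω α hα) := by
    rintro μ ⟨j, rfl⟩
    -- the basis vector e_j
    have hmem : (Pi.single j 1 : ℕ → K) ∈ Eomega K ω := by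
      have hev : (fun i => ‖(Pi.single j 1 : ℕ → K) i‖ * Real.sqrt ‖ω i‖)
          =ᶠ[atTop] fun _ => (0 : ℝ) := by
        filter_upwards [eventually_gt_atTop j] with i hi
        rw [Pi.single_eq_of_ne (by omega : i ≠ j)]
        simp
      exact Tendsto.congr' hev.symm tendsto_const_nhds
    set e : Eomega K ω := ⟨Pi.single j 1, hmem⟩ with he
    have hke : e ∈ LinearMap.ker (α j • LinearMap.id - diagOp ω α hα) := by
      rw [LinearMap.mem_ker]
      apply Subtype.ext
      funext i
      rw [resolvent_apply_coe]
      by_cases h : i = j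
      · subst h; simp [he]
      · simp [he, Pi.single_eq_of_ne h]
    intro hker
    rw [hker, Submodule.mem_bot] at hke
    have h1 : ((e : Eomega K ω) : ℕ → K) j = 1 := by simp [he]
    rw [hke] at h1
    simp at h1
  -- pointSpec ⊆ specSet
  have h2 : pointSpec (diagOp ω α hα) ⊆ specSet (diagOp ω α hα) := by
    intro μ hμ ⟨S, _, hSl, _⟩
    apply hμ
    rw [Submodule.eq_bot_iff]
    intro u hu
    rw [LinearMap.mem_ker] at hu
    have := congrArg (fun f => f u) hSl
    simpa [hu] using this.symm
  -- specSet ⊆ range α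
  have h3 : specSet (diagOp ω α hα) ⊆ Set.range α := by
    intro μ hμ
    by_contra hμr
    have hne : ∀ i, μ - α i ≠ 0 := by
      intro i h
      exact hμr ⟨i, by linear_combination -h⟩
    set β : ℕ → K := fun i => (μ - α i)⁻¹ with hβdef
    have hrβ : (Set.range β).Finite := by
      have hsub : Set.range β ⊆ (fun x => (μ - x)⁻¹) '' Set.range α := by
        rintro x ⟨i, rfl⟩; exact ⟨α i, ⟨i, rfl⟩, rfl⟩
      exact (hrange.image _).subset hsub
    have hβbdd : ∃ C, ∀ i, ‖β i‖ ≤ C := by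
      obtain ⟨C, hC⟩ := (hrβ.image norm).bddAbove
      exact ⟨C, fun i => hC ⟨β i, ⟨i, rfl⟩, rfl⟩⟩
    apply hμ
    refine ⟨diagOp ω β hβbdd, ?_, ?_, ?_⟩
    · obtain ⟨C, hC⟩ := id hβbdd
      have hC0 : 0 ≤ C := le_trans (norm_nonneg (β 0)) (hC 0)
      refine AddMonoidHomClass.continuous_of_bound (diagOp ω β hβbdd) C fun u => ?_
      rw [Eomega.norm_def, Eomega.norm_def]
      refine ciSup_le fun i => ?_
      rw [diagOp_apply_coe, norm_mul, mul_assoc]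
      calc ‖β i‖ * (‖(u : ℕ → K) i‖ * Real.sqrt ‖ω i‖)
          ≤ C * (‖(u : ℕ → K) i‖ * Real.sqrt ‖ω i‖) :=
            mul_le_mul_of_nonneg_right (hC i) (by positivity)
        _ ≤ C * ⨆ i, ‖(u : ℕ → K) i‖ * Real.sqrt ‖ω i‖ :=
            mul_le_mul_of_nonneg_left (le_ciSup (Eomega.bddAbove u) i) hC0
    · apply LinearMap.ext
      intro u
      apply Subtype.ext
      funext i
      rw [LinearMap.comp_apply, diagOp_apply_coe, resolvent_apply_coe, LinearMap.id_apply]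
      show (μ - α i)⁻¹ * ((μ - α i) * (u : ℕ → K) i) = (u : ℕ → K) i
      rw [← mul_assoc, inv_mul_cancel₀ (hne i), one_mul]
    · apply LinearMap.ext
      intro u
      apply Subtype.ext
      funext i
      rw [LinearMap.comp_apply, resolvent_apply_coe, diagOp_apply_coe, LinearMap.id_apply]
      show (μ - α i) * ((μ - α i)⁻¹ * (u : ℕ → K) i) = (u : ℕ → K) i
      rw [← mul_assoc, mul_inv_cancel₀ (hne i), one_mul]
  have heq : specSet (diagOp ω α hα) = Set.range α :=
    Set.Subset.antisymm h3 ((h1.trans h2))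
  exact ⟨heq ▸ hrange, Set.Subset.antisymm (heq ▸ h1) h2, heq⟩
end
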